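/- Let L ≥ 1 be an integer, let m ≥ 1 be an integer, and let s : ℤ/Lℤ → {0,1} be a configuration with at least one occupied site (s(i) = 1 for some i). For each occupied site i, let g(i) = d − 1, where d is the least positive integer with s(i+d) = 1 (the gap ahead of the car at i). Then Σ_{i : s(i)=1} min(g(i), m) = #{i ∈ ℤ/Lℤ : s(i) = 0} − #{i ∈ ℤ/Lℤ : s(i) = s(i+1) = ⋯ = s(i+m) = 0}. (This is the finite-lattice form of the identity: total flow = number of empty sites minus number of blocks of m+1 consecutive zeros.) -/

import Mathlib

open scoped Classical
open Finset

section Aux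
variable {L : ℕ} [NeZero L] (s : ZMod L → Bool) (g : ZMod L → ℕ)

lemma aux_g_lt (hg : ∀ i, s i = true →
      s (i + ((g i + 1 : ℕ) : ZMod L)) = true ∧
      ∀ d : ℕ, 0 < d → d ≤ g i → s (i + (d : ZMod L)) = false)
    {i : ZMod L} (hi : s i = true) : g i < L := by
  by_contra h
  push_neg at h
  have := (hg i hi).2 L (NeZero.pos L) h
  simp [ZMod.natCast_self, hi] at this

lemma aux_key (hg : ∀ i, s i = true →
      s (i + ((g i + 1 : ℕ) : ZMod L)) = true ∧
      ∀ d : ℕ, 0 < d → d ≤ g i → s (i + (d : ZMod L)) = false)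
    {i i' : ZMod L} (hi : s i = true) (hi' : s i' = true)
    {d d' : ℕ} (hd1 : 1 ≤ d) (hd2 : d ≤ g i) (hd1' : 1 ≤ d') (hd2' : d' ≤ g i')
    (heq : i + (d : ZMod L) = i' + (d' : ZMod L)) : i = i' ∧ d = d' := by
  have half : ∀ (i i' : ZMod L), s i = true → s i' = true → ∀ d d' : ℕ,
      1 ≤ d → d ≤ g i → 1 ≤ d' → d' ≤ g i' → d' ≤ d →
      i + (d : ZMod L) = i' + (d' : ZMod L) → d = d' := by
    intro i i' hi hi' d d' hd1 hd2 hd1' hd2' hle heq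
    by_contra hne
    have hlt : d' < d := lt_of_le_of_ne hle (Ne.symm hne)
    have h1 : ((d - d' : ℕ) : ZMod L) + (d' : ZMod L) = (d : ZMod L) := by
      rw [← Nat.cast_add, Nat.sub_add_cancel hle]
    have h2 : i + ((d - d' : ℕ) : ZMod L) = i' := by
      rw [← h1, ← add_assoc] at heq
      exact add_right_cancel heq
    have := (hg i hi).2 (d - d') (by omega) (by omega)
    rw [h2, hi'] at this
    exact absurd this (by simp)
  rcases le_total d' d with hle | hle
  · have hdd : d = d' := half i i' hi hi' d d' hd1 hd2 hd1' hd2' hle heq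
    subst hdd
    exact ⟨add_right_cancel heq, rfl⟩
  · have hdd : d' = d := half i' i hi' hi d' d hd1' hd2' hd1 hd2 hle heq.symm
    subst hdd
    exact ⟨add_right_cancel heq, rfl⟩

lemma aux_count (hg : ∀ i, s i = true →
      s (i + ((g i + 1 : ℕ) : ZMod L)) = true ∧
      ∀ d : ℕ, 0 < d → d ≤ g i → s (i + (d : ZMod L)) = false)
    (t : ZMod L → ℕ) (ht : ∀ i, s i = true → t i ≤ g i)
    (P : ZMod L → Prop) [DecidablePred P]
    (hP : ∀ j, P j ↔ ∃ i, s i = true ∧ ∃ d : ℕ, 1 ≤ d ∧ d ≤ t i ∧ j = i + (d : ZMod L)) :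
    (Finset.univ.filter P).card
      = ∑ i ∈ Finset.univ.filter (fun i => s i = true), t i := by
  have himg : Finset.univ.filter P
      = (Finset.univ.filter (fun i => s i = true)).biUnion
          (fun i => (Finset.Icc 1 (t i)).image (fun d : ℕ => i + (d : ZMod L))) := by
    ext j
    simp only [mem_filter, mem_univ, true_and, mem_biUnion, mem_image, Finset.mem_Icc]
    rw [hP]
    constructor
    · rintro ⟨i, hi, d, hd1, hd2, rfl⟩
      exact ⟨i, hi, d, ⟨hd1, hd2⟩, rfl⟩
    · rintro ⟨i, hi, d, ⟨hd1, hd2⟩, rfl⟩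
      exact ⟨i, hi, d, hd1, hd2, rfl⟩
  rw [himg, Finset.card_biUnion]
  · apply Finset.sum_congr rfl
    intro i hi
    simp only [mem_filter] at hi
    rw [Finset.card_image_of_injOn, Nat.card_Icc]
    · omega
    · intro a ha b hb hab
      simp only [Finset.coe_Icc, Set.mem_Icc] at ha hb
      have hab' : (a : ZMod L) = (b : ZMod L) := by
        exact add_left_cancel hab
      have hga := aux_g_lt s g hg hi.2
      have hta := ht i hi.2
      have : (a : ZMod L).val = (b : ZMod L).val := by rw [hab']
      rwa [ZMod.val_cast_of_lt (by omega), ZMod.val_cast_of_lt (by omega)] at this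
  · intro i hi i' hi' hne
    simp only [Finset.mem_coe, mem_filter] at hi hi'
    simp only [Finset.disjoint_left, mem_image, Finset.mem_Icc]
    rintro x ⟨d, ⟨hd1, hd2⟩, rfl⟩ ⟨d', ⟨hd1', hd2'⟩, heq⟩
    have := aux_key s g hg hi'.2 hi.2 hd1' (le_trans hd2' (ht i' hi'.2)) hd1
      (le_trans hd2 (ht i hi.2)) heq
    exact hne this.1.symm

lemma aux_near (hg : ∀ i, s i = true →
      s (i + ((g i + 1 : ℕ) : ZMod L)) = true ∧
      ∀ d : ℕ, 0 < d → d ≤ g i → s (i + (d : ZMod L)) = false)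
    (hex : ∃ i, s i = true) {j : ZMod L} (hj : s j = false) :
    ∃ i, s i = true ∧ ∃ k : ℕ, 1 ≤ k ∧ k ≤ g i ∧ j = i + (k : ZMod L) := by
  obtain ⟨i0, hi0⟩ := hex
  have hpex : ∃ k : ℕ, 1 ≤ k ∧ s (j - (k : ZMod L)) = true := by
    refine ⟨(j - i0).val, ?_, ?_⟩
    · rcases Nat.eq_zero_or_pos (j - i0).val with h | h
      · exfalso
        have : j - i0 = 0 := by
          have := ZMod.natCast_rightInverse (n := L) (j - i0)
          rw [h] at this
          simpa using this.symm
        have : j = i0 := by rw [sub_eq_zero] at this; exact this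
        rw [this, hi0] at hj; simp at hj
      · exact h
    · have : (((j - i0).val : ℕ) : ZMod L) = j - i0 := ZMod.natCast_rightInverse (n := L) _
      rw [this]
      simpa using hi0
  classical
  set k := Nat.find hpex with hk
  obtain ⟨hk1, hks⟩ := Nat.find_spec hpex
  set i := j - (k : ZMod L) with hi
  have hji : j = i + (k : ZMod L) := by rw [hi]; ring
  refine ⟨i, hks, k, hk1, ?_, hji⟩
  by_contra hgt
  push_neg at hgt
  -- g i < k
  rcases Nat.lt_or_ge (g i + 1) k with h | h
  case inr =>
    have hke : k = g i + 1 := by omega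
    have hthis : s (i + ((g i + 1 : ℕ) : ZMod L)) = true := (hg i hks).1
    rw [← hke, ← hji, hj] at hthis
    simp at hthis
  case inl =>
    set t := k - (g i + 1) with htdef
    have ht1 : 1 ≤ t := by omega
    have htk : t < k := by omega
    have hcast : j - (t : ZMod L) = i + ((k - t : ℕ) : ZMod L) := by
      rw [hji]
      have : ((k - t : ℕ) : ZMod L) = (k : ZMod L) - (t : ZMod L) := by
        rw [Nat.cast_sub (le_of_lt htk)]
      rw [this]; ring
    have hkt : k - t = g i + 1 := by omega
    have : s (j - (t : ZMod L)) = true := by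
      rw [hcast, hkt]; exact (hg i hks).1
    exact Nat.find_min hpex htk ⟨ht1, this⟩

end Aux

theorem totalFlow_eq_zeros_sub_blocks (L m : ℕ) [NeZero L] (hm : 1 ≤ m)
    (s : ZMod L → Bool) (hex : ∃ i, s i = true)
    (g : ZMod L → ℕ)
    (hg : ∀ i, s i = true →
      s (i + ((g i + 1 : ℕ) : ZMod L)) = true ∧
      ∀ d : ℕ, 0 < d → d ≤ g i → s (i + (d : ZMod L)) = false) :
    (∑ i ∈ Finset.univ.filter (fun i => s i = true), (min (g i) m : ℤ))
      = ((Finset.univ.filter (fun i => s i = false)).card : ℤ)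
        - ((Finset.univ.filter
            (fun i => ∀ r : ℕ, r ≤ m → s (i + (r : ZMod L)) = false)).card : ℤ) := by
  classical
  have hA : (Finset.univ.filter (fun i => s i = false)).card
      = ∑ i ∈ Finset.univ.filter (fun i => s i = true), g i := by
    apply aux_count s g hg g (fun i _ => le_refl _)
    intro j
    constructor
    · intro hj
      obtain ⟨i, hi, k, hk1, hk2, hjk⟩ := aux_near s g hg hex hj
      exact ⟨i, hi, k, hk1, hk2, hjk⟩
    · rintro ⟨i, hi, d, hd1, hd2, rfl⟩
      exact (hg i hi).2 d hd1 hd2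
  have hB : (Finset.univ.filter
        (fun i => ∀ r : ℕ, r ≤ m → s (i + (r : ZMod L)) = false)).card
      = ∑ i ∈ Finset.univ.filter (fun i => s i = true), (g i - m) := by
    apply aux_count s g hg (fun i => g i - m) (fun i _ => Nat.sub_le _ _)
    intro j
    constructor
    · intro hj
      have hj0 : s j = false := by
        have := hj 0 (Nat.zero_le m)
        simpa using this
      obtain ⟨i, hi, k, hk1, hk2, hjk⟩ := aux_near s g hg hex hj0
      refine ⟨i, hi, k, hk1, ?_, hjk⟩
      -- show k ≤ g i - m
      by_contra hgt
      push_neg at hgt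
      -- g i - m < k, i.e. g i < k + m
      have hgi : g i < k + m := by omega
      set r := g i + 1 - k with hrdef
      have hr1 : 1 ≤ r := by omega
      have hrm : r ≤ m := by omega
      have : s (j + (r : ZMod L)) = false := hj r hrm
      have hcast : j + (r : ZMod L) = i + ((k + r : ℕ) : ZMod L) := by
        rw [hjk]; push_cast; ring
      have hkr : k + r = g i + 1 := by omega
      rw [hcast, hkr] at this
      rw [(hg i hi).1] at this
      simp at this
    · rintro ⟨i, hi, d, hd1, hd2, rfl⟩
      intro r hr
      have hcast : i + (d : ZMod L) + (r : ZMod L) = i + ((d + r : ℕ) : ZMod L) := by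
        push_cast; ring
      rw [hcast]
      exact (hg i hi).2 (d + r) (by omega) (by omega)
  rw [hA, hB]
  push_cast
  rw [← Finset.sum_sub_distrib]
  apply Finset.sum_congr rfl
  intro i hi
  have := Nat.sub_le (g i) m
  push_cast
  omega
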